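/- Let (K_n) and (K'_n), n ∈ ℕ, be nonempty compact convex subsets of real normed vector spaces E_n and E'_n respectively. For each n let f_n : K_{n+1} → K_n, f'_n : K'_{n+1} → K'_n, ρ_n : K_{n+1} → K'_n and ρ'_n : K'_n → K_n be continuous maps that are affine (preserve convex combinations) and 1-Lipschitz, and assume the approximate intertwining conditions Σ_{n=0}^∞ d_∞(ρ'_n ∘ ρ_n, f_n) < ∞ and Σ_{n=0}^∞ d_∞(ρ_n ∘ ρ'_{n+1}, f'_n) < ∞, where d_∞ denotes the uniform (supremum) distance between two maps with the same compact domain. Let K = {x ∈ Π_n K_n : f_n(x_{n+1}) = x_n for all n} and K' = {x ∈ Π_n K'_n : f'_n(x_{n+1}) = x_n for all n}, each with the product topology. Then there exists a bijection ρ : K → K' which is a homeomorphism and affine, i.e. ρ(λx + (1−λ)y) = λρ(x) + (1−λ)ρ(y) for all x, y ∈ K and λ ∈ [0,1] (convex combinations in K and K' are formed coordinatewise). -/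

import Mathlib

open scoped BigOperators

open Filter Topology
set_option linter.unusedSectionVars false

section Tower

variable {E : ℕ → Type*} [∀ n, NormedAddCommGroup (E n)]

def chain (f : ∀ n, E (n + 1) → E n) (p : ∀ n, E n) : ∀ m, E m → ∀ n, E n
  | 0, x, n => if h : n = 0 then cast (by rw [h]) x else p n
  | m + 1, x, n => if h : n = m + 1 then cast (by rw [h]) x else chain f p m (f m x) n

theorem chain_self (f : ∀ n, E (n + 1) → E n) (p : ∀ n, E n) (m : ℕ) (x : E m) :
    chain f p m x m = x := by
  cases m <;> simp [chain]

theorem chain_succ (f : ∀ n, E (n + 1) → E n) (p : ∀ n, E n) {n m : ℕ} (h : n ≤ m)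
    (x : E (m + 1)) : chain f p (m + 1) x n = chain f p m (f m x) n := by
  rw [chain, dif_neg (by omega)]

theorem chain_step (f : ∀ n, E (n + 1) → E n) (p : ∀ n, E n) {n m : ℕ} (h : n + 1 ≤ m)
    (x : E m) : f n (chain f p m x (n + 1)) = chain f p m x n := by
  induction m with
  | zero => omega
  | succ m ih =>
    rcases Nat.lt_or_ge (n + 1) (m + 1) with h' | h'
    · rw [chain_succ f p (by omega) x, chain_succ f p (by omega) x, ih (by omega)]
    · have : n = m := by omega
      subst this
      rw [chain_self, chain_succ f p (le_refl n) x, chain_self]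

theorem chain_thread (f : ∀ n, E (n + 1) → E n) (p : ∀ n, E n) {x : ∀ n, E n}
    (hx : ∀ k, f k (x (k + 1)) = x k) {n m : ℕ} (h : n ≤ m) :
    chain f p m (x m) n = x n := by
  induction m with
  | zero => obtain rfl : n = 0 := Nat.le_zero.mp h; exact chain_self f p 0 _
  | succ m ih =>
    rcases Nat.lt_or_ge n (m + 1) with h' | h'
    · rw [chain_succ f p (by omega), hx m, ih (by omega)]
    · have : n = m + 1 := by omega
      subst this; exact chain_self f p _ _

variable {K : ∀ n, Set (E n)}

theorem chain_mem (f : ∀ n, E (n + 1) → E n) (p : ∀ n, E n)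
    (hf : ∀ n, Set.MapsTo (f n) (K (n + 1)) (K n)) {n m : ℕ} (h : n ≤ m)
    {x : E m} (hx : x ∈ K m) : chain f p m x n ∈ K n := by
  induction m with
  | zero => obtain rfl : n = 0 := Nat.le_zero.mp h; rw [chain_self]; exact hx
  | succ m ih =>
    rcases Nat.lt_or_ge n (m + 1) with h' | h'
    · rw [chain_succ f p (by omega)]; exact ih (by omega) (hf m hx)
    · have : n = m + 1 := by omega
      subst this; rw [chain_self]; exact hx

theorem chain_dist (f : ∀ n, E (n + 1) → E n) (p : ∀ n, E n)
    (hf : ∀ n, Set.MapsTo (f n) (K (n + 1)) (K n))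
    (hfl : ∀ n, ∀ x ∈ K (n + 1), ∀ y ∈ K (n + 1), dist (f n x) (f n y) ≤ dist x y)
    {n m : ℕ} (h : n ≤ m) {x y : E m} (hx : x ∈ K m) (hy : y ∈ K m) :
    dist (chain f p m x n) (chain f p m y n) ≤ dist x y := by
  induction m with
  | zero => obtain rfl : n = 0 := Nat.le_zero.mp h; rw [chain_self, chain_self]
  | succ m ih =>
    rcases Nat.lt_or_ge n (m + 1) with h' | h'
    · rw [chain_succ f p (by omega), chain_succ f p (by omega)]
      exact le_trans (ih (by omega) (hf m hx) (hf m hy)) (hfl m x hx y hy)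
    · have : n = m + 1 := by omega
      subst this; rw [chain_self, chain_self]

theorem chain_affine [∀ n, NormedSpace ℝ (E n)] (f : ∀ n, E (n + 1) → E n) (p : ∀ n, E n)
    (hf : ∀ n, Set.MapsTo (f n) (K (n + 1)) (K n))
    (hfa : ∀ n, ∀ x ∈ K (n + 1), ∀ y ∈ K (n + 1), ∀ a b : ℝ, 0 ≤ a → 0 ≤ b → a + b = 1 →
      f n (a • x + b • y) = a • f n x + b • f n y)
    {n m : ℕ} (h : n ≤ m) {x y : E m} (hx : x ∈ K m) (hy : y ∈ K m)
    {a b : ℝ} (ha : 0 ≤ a) (hb : 0 ≤ b) (hab : a + b = 1) :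
    chain f p m (a • x + b • y) n = a • chain f p m x n + b • chain f p m y n := by
  induction m with
  | zero => obtain rfl : n = 0 := Nat.le_zero.mp h; rw [chain_self, chain_self, chain_self]
  | succ m ih =>
    rcases Nat.lt_or_ge n (m + 1) with h' | h'
    · rw [chain_succ f p (by omega), chain_succ f p (by omega), chain_succ f p (by omega),
        hfa m x hx y hy a b ha hb hab]
      exact ih (by omega) (hf m hx) (hf m hy)
    · have : n = m + 1 := by omega
      subst this; rw [chain_self, chain_self, chain_self]

theorem tail_tendsto (u : ℕ → ℝ) :
    Tendsto (fun m => ∑' k, u (m + k)) atTop (𝓝 0) := by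
  simpa [add_comm] using tendsto_sum_nat_add u

theorem exists_thread (f : ∀ n, E (n + 1) → E n) (p : ∀ n, E n)
    (hKcp : ∀ n, IsCompact (K n))
    (hf : ∀ n, Set.MapsTo (f n) (K (n + 1)) (K n))
    (hfl : ∀ n, ∀ x ∈ K (n + 1), ∀ y ∈ K (n + 1), dist (f n x) (f n y) ≤ dist x y)
    (c : ∀ n, E n) (hc : ∀ n, c n ∈ K n)
    (u : ℕ → ℝ) (hus : Summable u)
    (hcd : ∀ n, dist (c n) (f n (c (n + 1))) ≤ u n) :
    ∃ y : ∀ n, E n, (∀ n, y n ∈ K n) ∧ (∀ n, f n (y (n + 1)) = y n) ∧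
      ∀ n m, n ≤ m → dist (y n) (chain f p m (c m) n) ≤ ∑' k, u (m + k) := by
  have key : ∀ n, ∃ a ∈ K n,
      Tendsto (fun j => chain f p (n + j) (c (n + j)) n) atTop (𝓝 a) ∧
      ∀ j, dist (chain f p (n + j) (c (n + j)) n) a ≤ ∑' k, u (n + j + k) := by
    intro n
    set s : ℕ → E n := fun j => chain f p (n + j) (c (n + j)) n with hs
    have hstep : ∀ j, dist (s j) (s (j + 1)) ≤ u (n + j) := by
      intro j
      have h1 : s (j + 1) = chain f p (n + j) (f (n + j) (c (n + j + 1))) n :=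
        chain_succ f p (Nat.le_add_right n j) _
      rw [h1]
      exact le_trans (chain_dist f p hf hfl (Nat.le_add_right n j) (hc _) (hf _ (hc _)))
        (hcd (n + j))
    have hsum' : Summable fun j => u (n + j) := by
      exact hus.comp_injective (add_right_injective n)
    have hcau : CauchySeq s := cauchySeq_of_dist_le_of_summable _ hstep hsum'
    obtain ⟨a, haK, hta⟩ := cauchySeq_tendsto_of_isComplete ((hKcp n).isComplete)
      (fun j => chain_mem f p hf (Nat.le_add_right n j) (hc _)) hcau
    refine ⟨a, haK, hta, fun j => ?_⟩
    have := dist_le_tsum_of_dist_le_of_tendsto (fun j => u (n + j)) hstep hsum' hta j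
    refine this.trans (le_of_eq ?_)
    exact tsum_congr fun k => by rw [add_assoc]
  choose y hyK hyt hye using key
  have hest : ∀ n m, n ≤ m → dist (y n) (chain f p m (c m) n) ≤ ∑' k, u (m + k) := by
    intro n m h
    obtain ⟨j, rfl⟩ := Nat.exists_eq_add_of_le h
    simpa [dist_comm] using hye n j
  refine ⟨y, hyK, fun n => ?_, hest⟩
  have hb : ∀ m, n + 1 ≤ m → dist (f n (y (n + 1))) (y n) ≤ 2 * ∑' k, u (m + k) := by
    intro m hm
    have h1 : dist (f n (y (n + 1))) (chain f p m (c m) n) ≤ ∑' k, u (m + k) := by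
      have := hest (n + 1) m hm
      calc dist (f n (y (n + 1))) (chain f p m (c m) n)
          = dist (f n (y (n + 1))) (f n (chain f p m (c m) (n + 1))) := by
            rw [chain_step f p hm]
        _ ≤ dist (y (n + 1)) (chain f p m (c m) (n + 1)) :=
            hfl n _ (hyK (n + 1)) _ (chain_mem f p hf hm (hc m))
        _ ≤ ∑' k, u (m + k) := this
    have h2 := hest n m (by omega)
    calc dist (f n (y (n + 1))) (y n)
        ≤ dist (f n (y (n + 1))) (chain f p m (c m) n) + dist (chain f p m (c m) n) (y n) :=
          dist_triangle _ _ _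
      _ ≤ ∑' k, u (m + k) + ∑' k, u (m + k) := by
          rw [dist_comm] at h2; exact add_le_add h1 h2
      _ = 2 * ∑' k, u (m + k) := by ring
  have h0 : dist (f n (y (n + 1))) (y n) ≤ 0 := by
    refine ge_of_tendsto (by simpa using (tail_tendsto u).const_mul 2) ?_
    filter_upwards [eventually_ge_atTop (n + 1)] with m hm using hb m hm
  have := dist_nonneg.antisymm h0
  exact dist_eq_zero.mp (by linarith [dist_nonneg (x := f n (y (n + 1))) (y := y n), h0])

end Tower
theorem dist_combo {V : Type*} [NormedAddCommGroup V] [NormedSpace ℝ V]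
    {a b : ℝ} (ha : 0 ≤ a) (hb : 0 ≤ b) (A A' B B' : V) :
    dist (a • A + b • B) (a • A' + b • B') ≤ a * dist A A' + b * dist B B' := by
  rw [dist_eq_norm, dist_eq_norm, dist_eq_norm]
  have h : a • A + b • B - (a • A' + b • B') = a • (A - A') + b • (B - B') := by
    rw [smul_sub, smul_sub]; abel
  rw [h]
  refine (norm_add_le _ _).trans ?_
  rw [norm_smul, norm_smul, Real.norm_of_nonneg ha, Real.norm_of_nonneg hb]

set_option maxHeartbeats 1000000 in
/-- Approximate intertwining of two inverse limits of compact convex metric spaces: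
if the maps `ρ_n : K_{n+1} → K'_n` and `ρ'_n : K'_n → K_n` (contractive, affine, continuous)
approximately intertwine the connecting maps `f_n` and `f'_n` in the summable sense, then the
inverse limits `K` and `K'` are affinely homeomorphic. -/
theorem stmt_0
    (E E' : ℕ → Type*)
    [∀ n, NormedAddCommGroup (E n)] [∀ n, NormedSpace ℝ (E n)]
    [∀ n, NormedAddCommGroup (E' n)] [∀ n, NormedSpace ℝ (E' n)]
    (K : ∀ n, Set (E n)) (K' : ∀ n, Set (E' n))
    (hKne : ∀ n, (K n).Nonempty) (hKcp : ∀ n, IsCompact (K n)) (hKcv : ∀ n, Convex ℝ (K n))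
    (hK'ne : ∀ n, (K' n).Nonempty) (hK'cp : ∀ n, IsCompact (K' n)) (hK'cv : ∀ n, Convex ℝ (K' n))
    (f : ∀ n, E (n + 1) → E n) (f' : ∀ n, E' (n + 1) → E' n)
    (ρ : ∀ n, E (n + 1) → E' n) (ρ' : ∀ n, E' n → E n)
    -- the maps send the relevant compact convex sets into each other
    (hf : ∀ n, Set.MapsTo (f n) (K (n + 1)) (K n))
    (hf' : ∀ n, Set.MapsTo (f' n) (K' (n + 1)) (K' n))
    (hρ : ∀ n, Set.MapsTo (ρ n) (K (n + 1)) (K' n))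
    (hρ' : ∀ n, Set.MapsTo (ρ' n) (K' n) (K n))
    -- continuity
    (hfc : ∀ n, ContinuousOn (f n) (K (n + 1)))
    (hf'c : ∀ n, ContinuousOn (f' n) (K' (n + 1)))
    (hρc : ∀ n, ContinuousOn (ρ n) (K (n + 1)))
    (hρ'c : ∀ n, ContinuousOn (ρ' n) (K' n))
    -- 1-Lipschitz (contractive)
    (hfl : ∀ n, LipschitzOnWith 1 (f n) (K (n + 1)))
    (hf'l : ∀ n, LipschitzOnWith 1 (f' n) (K' (n + 1)))
    (hρl : ∀ n, LipschitzOnWith 1 (ρ n) (K (n + 1)))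
    (hρ'l : ∀ n, LipschitzOnWith 1 (ρ' n) (K' n))
    -- affine
    (hfa : ∀ n, ∀ x ∈ K (n + 1), ∀ y ∈ K (n + 1), ∀ a b : ℝ, 0 ≤ a → 0 ≤ b → a + b = 1 →
      f n (a • x + b • y) = a • f n x + b • f n y)
    (hf'a : ∀ n, ∀ x ∈ K' (n + 1), ∀ y ∈ K' (n + 1), ∀ a b : ℝ, 0 ≤ a → 0 ≤ b → a + b = 1 →
      f' n (a • x + b • y) = a • f' n x + b • f' n y)
    (hρa : ∀ n, ∀ x ∈ K (n + 1), ∀ y ∈ K (n + 1), ∀ a b : ℝ, 0 ≤ a → 0 ≤ b → a + b = 1 →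
      ρ n (a • x + b • y) = a • ρ n x + b • ρ n y)
    (hρ'a : ∀ n, ∀ x ∈ K' n, ∀ y ∈ K' n, ∀ a b : ℝ, 0 ≤ a → 0 ≤ b → a + b = 1 →
      ρ' n (a • x + b • y) = a • ρ' n x + b • ρ' n y)
    -- approximate intertwining, with respect to the uniform distance
    (hsum1 : Summable (fun n => ⨆ x : K (n + 1), dist (ρ' n (ρ n x)) (f n x)))
    (hsum2 : Summable (fun n => ⨆ x : K' (n + 1), dist (ρ n (ρ' (n + 1) x)) (f' n x))) :
    -- conclusion: the inverse limits are affinely homeomorphic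
    ∀ (Klim : Set (∀ n, E n)) (K'lim : Set (∀ n, E' n)),
      Klim = {x | (∀ n, x n ∈ K n) ∧ ∀ n, f n (x (n + 1)) = x n} →
      K'lim = {x | (∀ n, x n ∈ K' n) ∧ ∀ n, f' n (x (n + 1)) = x n} →
      ∃ h : Klim ≃ₜ K'lim,
        ∀ (x y : Klim) (a b : ℝ), 0 ≤ a → 0 ≤ b → a + b = 1 →
          ∀ hmem : (fun n => a • (x : ∀ n, E n) n + b • (y : ∀ n, E n) n) ∈ Klim,
            ((h ⟨_, hmem⟩ : ∀ n, E' n)) =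
              fun n => a • (h x : ∀ n, E' n) n + b • (h y : ∀ n, E' n) n := by
  intro Klim K'lim hKlim hK'lim
  subst hKlim hK'lim
  classical
  -- base points
  set p : ∀ n, E n := fun n => (hKne n).some with hp
  set p' : ∀ n, E' n := fun n => (hK'ne n).some with hp'
  -- distance form of the Lipschitz hypotheses
  have hFd : ∀ n, ∀ x ∈ K (n + 1), ∀ y ∈ K (n + 1), dist (f n x) (f n y) ≤ dist x y :=
    fun n x hx y hy => by simpa using (hfl n).dist_le_mul x hx y hy
  have hF'd : ∀ n, ∀ x ∈ K' (n + 1), ∀ y ∈ K' (n + 1), dist (f' n x) (f' n y) ≤ dist x y :=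
    fun n x hx y hy => by simpa using (hf'l n).dist_le_mul x hx y hy
  have hRd : ∀ n, ∀ x ∈ K (n + 1), ∀ y ∈ K (n + 1), dist (ρ n x) (ρ n y) ≤ dist x y :=
    fun n x hx y hy => by simpa using (hρl n).dist_le_mul x hx y hy
  have hR'd : ∀ n, ∀ x ∈ K' n, ∀ y ∈ K' n, dist (ρ' n x) (ρ' n y) ≤ dist x y :=
    fun n x hx y hy => by simpa using (hρ'l n).dist_le_mul x hx y hy
  -- the sup distances
  set ε : ℕ → ℝ := fun n => ⨆ x : K (n + 1), dist (ρ' n (ρ n x)) (f n x) with hεdef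
  set δ : ℕ → ℝ := fun n => ⨆ x : K' (n + 1), dist (ρ n (ρ' (n + 1) x)) (f' n x) with hδdef
  have hεle : ∀ n, ∀ x ∈ K (n + 1), dist (ρ' n (ρ n x)) (f n x) ≤ ε n := by
    intro n x hx
    have hcont : ContinuousOn (fun x => dist (ρ' n (ρ n x)) (f n x)) (K (n + 1)) :=
      (continuous_dist.comp_continuousOn (ContinuousOn.prodMk ((hρ'c n).comp (hρc n) (hρ n)) (hfc n)) :)
    have hbdd : BddAbove (Set.range fun x : K (n + 1) => dist (ρ' n (ρ n x)) (f n x)) := by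
      have hb2 := (hKcp (n + 1)).bddAbove_image hcont
      rwa [Set.image_eq_range] at hb2
    exact le_ciSup hbdd ⟨x, hx⟩
  have hδle : ∀ n, ∀ x ∈ K' (n + 1), dist (ρ n (ρ' (n + 1) x)) (f' n x) ≤ δ n := by
    intro n x hx
    have hcont : ContinuousOn (fun x => dist (ρ n (ρ' (n + 1) x)) (f' n x)) (K' (n + 1)) :=
      (continuous_dist.comp_continuousOn (ContinuousOn.prodMk ((hρc n).comp (hρ'c (n + 1)) (hρ' (n + 1))) (hf'c n)) :)
    have hbdd : BddAbove (Set.range fun x : K' (n + 1) => dist (ρ n (ρ' (n + 1) x)) (f' n x)) := by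
      have hb2 := (hK'cp (n + 1)).bddAbove_image hcont
      rwa [Set.image_eq_range] at hb2
    exact le_ciSup hbdd ⟨x, hx⟩
  have hεs : Summable ε := hsum1
  have hδs : Summable δ := hsum2
  -- the modulus sequences
  set u1 : ℕ → ℝ := fun n => ε (n + 1) + δ n with hu1def
  set u2 : ℕ → ℝ := fun n => δ (n + 1) + ε (n + 1) with hu2def
  have hu1s : Summable u1 := ((summable_nat_add_iff 1).mpr hεs).add hδs
  have hu2s : Summable u2 :=
    ((summable_nat_add_iff 1).mpr hδs).add ((summable_nat_add_iff 1).mpr hεs)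
  -- the intertwining estimates
  have comm1 : ∀ n, ∀ x ∈ K (n + 2),
      dist (ρ n (f (n + 1) x)) (f' n (ρ (n + 1) x)) ≤ u1 n := by
    intro n x hx
    have h1 : dist (ρ n (f (n + 1) x)) (ρ n (ρ' (n + 1) (ρ (n + 1) x))) ≤ ε (n + 1) := by
      refine (hRd n _ (hf (n + 1) hx) _ (hρ' (n + 1) (hρ (n + 1) hx))).trans ?_
      rw [dist_comm]
      exact hεle (n + 1) x hx
    have h2 : dist (ρ n (ρ' (n + 1) (ρ (n + 1) x))) (f' n (ρ (n + 1) x)) ≤ δ n :=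
      hδle n _ (hρ (n + 1) hx)
    calc dist (ρ n (f (n + 1) x)) (f' n (ρ (n + 1) x))
        ≤ _ + _ := dist_triangle _ (ρ n (ρ' (n + 1) (ρ (n + 1) x))) _
      _ ≤ ε (n + 1) + δ n := add_le_add h1 h2
  -- the reverse map on coordinates
  set s : ∀ n, E' (n + 1) → E n := fun n v => f n (ρ' (n + 1) v) with hsdef
  have hsmap : ∀ n, Set.MapsTo (s n) (K' (n + 1)) (K n) :=
    fun n v hv => hf n (hρ' (n + 1) hv)
  have hsd : ∀ n, ∀ x ∈ K' (n + 1), ∀ y ∈ K' (n + 1), dist (s n x) (s n y) ≤ dist x y :=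
    fun n x hx y hy => (hFd n _ (hρ' (n + 1) hx) _ (hρ' (n + 1) hy)).trans
      (hR'd (n + 1) x hx y hy)
  have hsa : ∀ n, ∀ x ∈ K' (n + 1), ∀ y ∈ K' (n + 1), ∀ a b : ℝ, 0 ≤ a → 0 ≤ b → a + b = 1 →
      s n (a • x + b • y) = a • s n x + b • s n y := by
    intro n x hx y hy a b ha hb hab
    show f n (ρ' (n + 1) (a • x + b • y)) = a • f n (ρ' (n + 1) x) + b • f n (ρ' (n + 1) y)
    rw [hρ'a (n + 1) x hx y hy a b ha hb hab,
      hfa n _ (hρ' (n + 1) hx) _ (hρ' (n + 1) hy) a b ha hb hab]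
  have comm2 : ∀ n, ∀ v ∈ K' (n + 2),
      dist (s n (f' (n + 1) v)) (f n (s (n + 1) v)) ≤ u2 n := by
    intro n v hv
    have h0 : dist (s n (f' (n + 1) v)) (f n (s (n + 1) v))
        ≤ dist (ρ' (n + 1) (f' (n + 1) v)) (f (n + 1) (ρ' (n + 2) v)) :=
      hFd n _ (hρ' (n + 1) (hf' (n + 1) hv)) _ (hf (n + 1) (hρ' (n + 2) hv))
    have h1 : dist (ρ' (n + 1) (f' (n + 1) v)) (ρ' (n + 1) (ρ (n + 1) (ρ' (n + 2) v)))
        ≤ δ (n + 1) := by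
      refine (hR'd (n + 1) _ (hf' (n + 1) hv) _ (hρ (n + 1) (hρ' (n + 2) hv))).trans ?_
      rw [dist_comm]
      exact hδle (n + 1) v hv
    have h2 : dist (ρ' (n + 1) (ρ (n + 1) (ρ' (n + 2) v))) (f (n + 1) (ρ' (n + 2) v))
        ≤ ε (n + 1) := hεle (n + 1) _ (hρ' (n + 2) hv)
    calc dist (s n (f' (n + 1) v)) (f n (s (n + 1) v))
        ≤ dist (ρ' (n + 1) (f' (n + 1) v)) (f (n + 1) (ρ' (n + 2) v)) := h0
      _ ≤ _ + _ := dist_triangle _ (ρ' (n + 1) (ρ (n + 1) (ρ' (n + 2) v))) _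
      _ ≤ δ (n + 1) + ε (n + 1) := add_le_add h1 h2
  -- construction of the forward map
  have main1 : ∀ x : ∀ n, E n, (∀ n, x n ∈ K n) → (∀ n, f n (x (n + 1)) = x n) →
      ∃ y : ∀ n, E' n, (∀ n, y n ∈ K' n) ∧ (∀ n, f' n (y (n + 1)) = y n) ∧
        ∀ n m, n ≤ m → dist (y n) (chain f' p' m (ρ m (x (m + 1))) n) ≤ ∑' k, u1 (m + k) := by
    intro x hxm hxt
    refine exists_thread f' p' hK'cp hf' hF'd (fun m => ρ m (x (m + 1)))
      (fun m => hρ m (hxm (m + 1))) u1 hu1s (fun m => ?_)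
    have hx1 : x (m + 1) = f (m + 1) (x (m + 2)) := (hxt (m + 1)).symm
    calc dist (ρ m (x (m + 1))) (f' m (ρ (m + 1) (x (m + 2))))
        = dist (ρ m (f (m + 1) (x (m + 2)))) (f' m (ρ (m + 1) (x (m + 2)))) := by rw [← hx1]
      _ ≤ u1 m := comm1 m _ (hxm (m + 2))
  choose Φ hΦm hΦt hΦe using main1
  have main2 : ∀ x : ∀ n, E' n, (∀ n, x n ∈ K' n) → (∀ n, f' n (x (n + 1)) = x n) →
      ∃ z : ∀ n, E n, (∀ n, z n ∈ K n) ∧ (∀ n, f n (z (n + 1)) = z n) ∧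
        ∀ n m, n ≤ m → dist (z n) (chain f p m (s m (x (m + 1))) n) ≤ ∑' k, u2 (m + k) := by
    intro x hxm hxt
    refine exists_thread f p hKcp hf hFd (fun m => s m (x (m + 1)))
      (fun m => hsmap m (hxm (m + 1))) u2 hu2s (fun m => ?_)
    have hx1 : x (m + 1) = f' (m + 1) (x (m + 2)) := (hxt (m + 1)).symm
    calc dist (s m (x (m + 1))) (f m (s (m + 1) (x (m + 2))))
        = dist (s m (f' (m + 1) (x (m + 2)))) (f m (s (m + 1) (x (m + 2)))) := by rw [← hx1]
      _ ≤ u2 m := comm2 m _ (hxm (m + 2))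
  choose Ψ hΨm hΨt hΨe using main2
  -- pointwise key estimates (the case n = m)
  have hΦkey : ∀ x hxm hxt m, dist (Φ x hxm hxt m) (ρ m (x (m + 1))) ≤ ∑' k, u1 (m + k) := by
    intro x hxm hxt m
    simpa [chain_self] using hΦe x hxm hxt m m le_rfl
  have hΨkey : ∀ x hxm hxt m, dist (Ψ x hxm hxt m) (s m (x (m + 1))) ≤ ∑' k, u2 (m + k) := by
    intro x hxm hxt m
    simpa [chain_self] using hΨe x hxm hxt m m le_rfl
  -- the inverse identities
  have left : ∀ x hxm hxt, Ψ (Φ x hxm hxt) (hΦm x hxm hxt) (hΦt x hxm hxt) = x := by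
    intro x hxm hxt
    set y := Φ x hxm hxt with hy
    set z := Ψ y (hΦm x hxm hxt) (hΦt x hxm hxt) with hz
    have hzx : ∀ m, dist (z m) (x m)
        ≤ (∑' k, u2 (m + k)) + (∑' k, u1 ((m + 1) + k)) + ε (m + 1) := by
      intro m
      have h1 : dist (z m) (s m (y (m + 1))) ≤ ∑' k, u2 (m + k) :=
        hΨkey y (hΦm x hxm hxt) (hΦt x hxm hxt) m
      have h2 : dist (s m (y (m + 1))) (s m (ρ (m + 1) (x (m + 2))))
          ≤ ∑' k, u1 ((m + 1) + k) :=
        (hsd m _ (hΦm x hxm hxt (m + 1)) _ (hρ (m + 1) (hxm (m + 2)))).trans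
          (hΦkey x hxm hxt (m + 1))
      have h3 : dist (s m (ρ (m + 1) (x (m + 2)))) (x m) ≤ ε (m + 1) := by
        have hq : dist (f m (ρ' (m + 1) (ρ (m + 1) (x (m + 2))))) (f m (f (m + 1) (x (m + 2))))
            ≤ ε (m + 1) :=
          (hFd m _ (hρ' (m + 1) (hρ (m + 1) (hxm (m + 2)))) _ (hf (m + 1) (hxm (m + 2)))).trans
            (hεle (m + 1) _ (hxm (m + 2)))
        have hr : f m (f (m + 1) (x (m + 2))) = x m := by rw [hxt (m + 1), hxt m]
        rw [← hr]
        exact hq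
      have tr1 := dist_triangle (z m) (s m (y (m + 1))) (x m)
      have tr2 := dist_triangle (s m (y (m + 1))) (s m (ρ (m + 1) (x (m + 2)))) (x m)
      linarith
    funext n
    have hb : ∀ m, n ≤ m → dist (z n) (x n)
        ≤ (∑' k, u2 (m + k)) + (∑' k, u1 ((m + 1) + k)) + ε (m + 1) := by
      intro m hnm
      have e1 : chain f p m (z m) n = z n :=
        chain_thread f p (hΨt y (hΦm x hxm hxt) (hΦt x hxm hxt)) hnm
      have e2 : chain f p m (x m) n = x n := chain_thread f p hxt hnm
      rw [← e1, ← e2]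
      exact (chain_dist f p hf hFd hnm (hΨm y (hΦm x hxm hxt) (hΦt x hxm hxt) m) (hxm m)).trans
        (hzx m)
    have h0 : dist (z n) (x n) ≤ 0 := by
      have htt : Filter.Tendsto
          (fun m => (∑' k, u2 (m + k)) + (∑' k, u1 ((m + 1) + k)) + ε (m + 1))
          Filter.atTop (nhds 0) := by
        have t1 := tail_tendsto u2
        have t2 := (tail_tendsto u1).comp (tendsto_add_atTop_nat 1)
        have t3 := hεs.tendsto_atTop_zero.comp (tendsto_add_atTop_nat 1)
        simpa using (t1.add t2).add t3
      refine ge_of_tendsto htt ?_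
      filter_upwards [Filter.eventually_ge_atTop n] with m hm using hb m hm
    exact dist_le_zero.mp h0
  have right : ∀ x hxm hxt, Φ (Ψ x hxm hxt) (hΨm x hxm hxt) (hΨt x hxm hxt) = x := by
    intro x hxm hxt
    set z := Ψ x hxm hxt with hz
    set y := Φ z (hΨm x hxm hxt) (hΨt x hxm hxt) with hy
    have hyx : ∀ m, dist (y m) (x m)
        ≤ (∑' k, u1 (m + k)) + (∑' k, u2 ((m + 1) + k)) + u1 m + δ (m + 1) := by
      intro m
      have h1 : dist (y m) (ρ m (z (m + 1))) ≤ ∑' k, u1 (m + k) :=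
        hΦkey z (hΨm x hxm hxt) (hΨt x hxm hxt) m
      set w : E (m + 2) := ρ' (m + 2) (x (m + 2)) with hw
      have hwK : w ∈ K (m + 2) := hρ' (m + 2) (hxm (m + 2))
      have h2 : dist (ρ m (z (m + 1))) (ρ m (f (m + 1) w)) ≤ ∑' k, u2 ((m + 1) + k) :=
        (hRd m _ (hΨm x hxm hxt (m + 1)) _ (hf (m + 1) hwK)).trans
          (hΨkey x hxm hxt (m + 1))
      have h3 : dist (ρ m (f (m + 1) w)) (f' m (ρ (m + 1) w)) ≤ u1 m := comm1 m w hwK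
      have h4 : dist (f' m (ρ (m + 1) w)) (x m) ≤ δ (m + 1) := by
        have hq : dist (f' m (ρ (m + 1) w)) (f' m (f' (m + 1) (x (m + 2)))) ≤ δ (m + 1) :=
          (hF'd m _ (hρ (m + 1) hwK) _ (hf' (m + 1) (hxm (m + 2)))).trans
            (hδle (m + 1) _ (hxm (m + 2)))
        have hr : f' m (f' (m + 1) (x (m + 2))) = x m := by rw [hxt (m + 1), hxt m]
        rw [← hr]
        exact hq
      have tr1 := dist_triangle (y m) (ρ m (z (m + 1))) (x m)
      have tr2 := dist_triangle (ρ m (z (m + 1))) (ρ m (f (m + 1) w)) (x m)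
      have tr3 := dist_triangle (ρ m (f (m + 1) w)) (f' m (ρ (m + 1) w)) (x m)
      linarith
    funext n
    have hb : ∀ m, n ≤ m → dist (y n) (x n)
        ≤ (∑' k, u1 (m + k)) + (∑' k, u2 ((m + 1) + k)) + u1 m + δ (m + 1) := by
      intro m hnm
      have e1 : chain f' p' m (y m) n = y n :=
        chain_thread f' p' (hΦt z (hΨm x hxm hxt) (hΨt x hxm hxt)) hnm
      have e2 : chain f' p' m (x m) n = x n := chain_thread f' p' hxt hnm
      rw [← e1, ← e2]
      exact (chain_dist f' p' hf' hF'd hnm (hΦm z (hΨm x hxm hxt) (hΨt x hxm hxt) m)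
        (hxm m)).trans (hyx m)
    have h0 : dist (y n) (x n) ≤ 0 := by
      have htt : Filter.Tendsto
          (fun m => (∑' k, u1 (m + k)) + (∑' k, u2 ((m + 1) + k)) + u1 m + δ (m + 1))
          Filter.atTop (nhds 0) := by
        have t1 := tail_tendsto u1
        have t2 := (tail_tendsto u2).comp (tendsto_add_atTop_nat 1)
        have t3 := hu1s.tendsto_atTop_zero
        have t4 := hδs.tendsto_atTop_zero.comp (tendsto_add_atTop_nat 1)
        simpa using ((t1.add t2).add t3).add t4
      refine ge_of_tendsto htt ?_
      filter_upwards [Filter.eventually_ge_atTop n] with m hm using hb m hm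
    exact dist_le_zero.mp h0
  -- affineness of Φ
  have aff : ∀ x hxm hxt y hym hyt (a b : ℝ), 0 ≤ a → 0 ≤ b → a + b = 1 →
      ∀ hzm hzt, Φ (fun n => a • x n + b • y n) hzm hzt
        = fun n => a • Φ x hxm hxt n + b • Φ y hym hyt n := by
    intro x hxm hxt y hym hyt a b ha hb hab hzm hzt
    funext n
    set zc : ∀ n, E n := fun n => a • x n + b • y n with hzc
    have hbnd : ∀ m, n ≤ m →
        dist (Φ zc hzm hzt n) (a • Φ x hxm hxt n + b • Φ y hym hyt n)
          ≤ 2 * ∑' k, u1 (m + k) := by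
      intro m hnm
      have h1 : dist (Φ zc hzm hzt n) (chain f' p' m (ρ m (zc (m + 1))) n)
          ≤ ∑' k, u1 (m + k) := hΦe zc hzm hzt n m hnm
      have hρz : ρ m (zc (m + 1)) = a • ρ m (x (m + 1)) + b • ρ m (y (m + 1)) :=
        hρa m _ (hxm (m + 1)) _ (hym (m + 1)) a b ha hb hab
      have hch : chain f' p' m (ρ m (zc (m + 1))) n
          = a • chain f' p' m (ρ m (x (m + 1))) n + b • chain f' p' m (ρ m (y (m + 1))) n := by
        rw [hρz]
        exact chain_affine f' p' hf' hf'a hnm (hρ m (hxm (m + 1))) (hρ m (hym (m + 1))) ha hb hab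
      have h2 : dist (chain f' p' m (ρ m (zc (m + 1))) n)
          (a • Φ x hxm hxt n + b • Φ y hym hyt n) ≤ ∑' k, u1 (m + k) := by
        rw [hch]
        have hA := hΦe x hxm hxt n m hnm
        have hB := hΦe y hym hyt n m hnm
        rw [dist_comm] at hA hB
        calc dist (a • chain f' p' m (ρ m (x (m + 1))) n
                + b • chain f' p' m (ρ m (y (m + 1))) n)
              (a • Φ x hxm hxt n + b • Φ y hym hyt n)
            ≤ a * dist (chain f' p' m (ρ m (x (m + 1))) n) (Φ x hxm hxt n)
              + b * dist (chain f' p' m (ρ m (y (m + 1))) n) (Φ y hym hyt n) :=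
              dist_combo ha hb _ _ _ _
          _ ≤ a * (∑' k, u1 (m + k)) + b * (∑' k, u1 (m + k)) :=
              add_le_add (mul_le_mul_of_nonneg_left hA ha) (mul_le_mul_of_nonneg_left hB hb)
          _ = (a + b) * (∑' k, u1 (m + k)) := by ring
          _ = ∑' k, u1 (m + k) := by rw [hab, one_mul]
      calc dist (Φ zc hzm hzt n) (a • Φ x hxm hxt n + b • Φ y hym hyt n)
          ≤ _ + _ := dist_triangle _ (chain f' p' m (ρ m (zc (m + 1))) n) _
        _ ≤ (∑' k, u1 (m + k)) + (∑' k, u1 (m + k)) := add_le_add h1 h2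
        _ = 2 * ∑' k, u1 (m + k) := by ring
    have h0 : dist (Φ zc hzm hzt n) (a • Φ x hxm hxt n + b • Φ y hym hyt n) ≤ 0 := by
      have htt : Filter.Tendsto (fun m => 2 * ∑' k, u1 (m + k)) Filter.atTop (nhds 0) := by
        simpa using (tail_tendsto u1).const_mul 2
      refine ge_of_tendsto htt ?_
      filter_upwards [Filter.eventually_ge_atTop n] with m hm using hbnd m hm
    exact dist_le_zero.mp h0
  -- the maps on the subtypes
  set T : {x : ∀ n, E n | (∀ n, x n ∈ K n) ∧ ∀ n, f n (x (n + 1)) = x n} →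
      {x : ∀ n, E' n | (∀ n, x n ∈ K' n) ∧ ∀ n, f' n (x (n + 1)) = x n} :=
    fun x => ⟨Φ x.1 x.2.1 x.2.2, hΦm x.1 x.2.1 x.2.2, hΦt x.1 x.2.1 x.2.2⟩ with hT
  set S : {x : ∀ n, E' n | (∀ n, x n ∈ K' n) ∧ ∀ n, f' n (x (n + 1)) = x n} →
      {x : ∀ n, E n | (∀ n, x n ∈ K n) ∧ ∀ n, f n (x (n + 1)) = x n} :=
    fun x => ⟨Ψ x.1 x.2.1 x.2.2, hΨm x.1 x.2.1 x.2.2, hΨt x.1 x.2.1 x.2.2⟩ with hS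
  have contT : Continuous T := by
    refine Continuous.subtype_mk (continuous_pi fun n => ?_) _
    have hunif : TendstoUniformly
        (fun m x => chain f' p' m (ρ m ((x : {x : ∀ n, E n | (∀ n, x n ∈ K n) ∧
          ∀ n, f n (x (n + 1)) = x n}).1 (m + 1))) n)
        (fun x => Φ x.1 x.2.1 x.2.2 n) Filter.atTop := by
      rw [Metric.tendstoUniformly_iff]
      intro e he
      filter_upwards [Filter.eventually_ge_atTop n,
        (tail_tendsto u1).eventually (gt_mem_nhds he)] with m hm hlt x
      exact lt_of_le_of_lt (hΦe x.1 x.2.1 x.2.2 n m hm) hlt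
    refine hunif.continuous (Filter.Eventually.frequently ?_)
    filter_upwards [Filter.eventually_ge_atTop n] with m hm
    have h1 : Continuous fun x : {x : ∀ n, E n | (∀ n, x n ∈ K n) ∧
        ∀ n, f n (x (n + 1)) = x n} => x.1 (m + 1) :=
      (continuous_apply (m + 1)).comp continuous_subtype_val
    have h2 : Continuous fun x : {x : ∀ n, E n | (∀ n, x n ∈ K n) ∧
        ∀ n, f n (x (n + 1)) = x n} => ρ m (x.1 (m + 1)) :=
      (hρc m).comp_continuous h1 (fun x => x.2.1 (m + 1))
    have h3 : ContinuousOn (fun v => chain f' p' m v n) (K' m) :=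
      (LipschitzOnWith.of_dist_le_mul (K := 1) fun v hv w hw => by
        simpa using chain_dist f' p' hf' hF'd hm hv hw).continuousOn
    exact h3.comp_continuous h2 (fun x => hρ m (x.2.1 (m + 1)))
  have contS : Continuous S := by
    refine Continuous.subtype_mk (continuous_pi fun n => ?_) _
    have hunif : TendstoUniformly
        (fun m x => chain f p m (s m ((x : {x : ∀ n, E' n | (∀ n, x n ∈ K' n) ∧
          ∀ n, f' n (x (n + 1)) = x n}).1 (m + 1))) n)
        (fun x => Ψ x.1 x.2.1 x.2.2 n) Filter.atTop := by
      rw [Metric.tendstoUniformly_iff]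
      intro e he
      filter_upwards [Filter.eventually_ge_atTop n,
        (tail_tendsto u2).eventually (gt_mem_nhds he)] with m hm hlt x
      exact lt_of_le_of_lt (hΨe x.1 x.2.1 x.2.2 n m hm) hlt
    refine hunif.continuous (Filter.Eventually.frequently ?_)
    filter_upwards [Filter.eventually_ge_atTop n] with m hm
    have h1 : Continuous fun x : {x : ∀ n, E' n | (∀ n, x n ∈ K' n) ∧
        ∀ n, f' n (x (n + 1)) = x n} => x.1 (m + 1) :=
      (continuous_apply (m + 1)).comp continuous_subtype_val
    have hsc : ContinuousOn (s m) (K' (m + 1)) :=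
      (hfc m).comp (hρ'c (m + 1)) (fun v hv => hρ' (m + 1) hv)
    have h2 : Continuous fun x : {x : ∀ n, E' n | (∀ n, x n ∈ K' n) ∧
        ∀ n, f' n (x (n + 1)) = x n} => s m (x.1 (m + 1)) :=
      hsc.comp_continuous h1 (fun x => x.2.1 (m + 1))
    have h3 : ContinuousOn (fun v => chain f p m v n) (K m) :=
      (LipschitzOnWith.of_dist_le_mul (K := 1) fun v hv w hw => by
        simpa using chain_dist f p hf hFd hm hv hw).continuousOn
    exact h3.comp_continuous h2 (fun x => hsmap m (x.2.1 (m + 1)))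
  refine ⟨⟨⟨T, S, fun x => Subtype.ext (left x.1 x.2.1 x.2.2),
    fun x => Subtype.ext (right x.1 x.2.1 x.2.2)⟩, contT, contS⟩, ?_⟩
  intro x y a b ha hb hab hmem
  exact aff x.1 x.2.1 x.2.2 y.1 y.2.1 y.2.2 a b ha hb hab hmem.1 hmem.2
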